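/- Let G = Z^n ⋊_φ Z and u = w t^s, v = x t^s in normal form with φ^s the identity automorphism. Then u and v are conjugate in G if and only if there exists e ∈ Z with x = φ^e(w); in that case t^e conjugates u to v. -/

import Mathlib

open Matrix

def mAut {n : ℕ} (M : (Matrix (Fin n) (Fin n) ℤ)ˣ) : (Fin n → ℤ) ≃+ (Fin n → ℤ) where
  toFun v := (M : Matrix (Fin n) (Fin n) ℤ) *ᵥ v
  invFun v := (↑M⁻¹ : Matrix (Fin n) (Fin n) ℤ) *ᵥ v
  left_inv v := by simp [Matrix.mulVec_mulVec]
  right_inv v := by simp [Matrix.mulVec_mulVec]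
  map_add' u v := by simp [Matrix.mulVec_add]

def tAct {n : ℕ} (M : (Matrix (Fin n) (Fin n) ℤ)ˣ) :
    Multiplicative ℤ →* MulAut (Multiplicative (Fin n → ℤ)) :=
  zpowersHom _ (AddEquiv.toMultiplicative (mAut M))

abbrev G (n : ℕ) (M : (Matrix (Fin n) (Fin n) ℤ)ˣ) :=
  SemidirectProduct (Multiplicative (Fin n → ℤ)) (Multiplicative ℤ) (tAct M)

def nf {n : ℕ} (M : (Matrix (Fin n) (Fin n) ℤ)ˣ) (w : Fin n → ℤ) (k : ℤ) : G n M :=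
  SemidirectProduct.inl (Multiplicative.ofAdd w) * SemidirectProduct.inr (Multiplicative.ofAdd k)

/-- `mAut` as a monoid hom. -/
def mAutHom {n : ℕ} : (Matrix (Fin n) (Fin n) ℤ)ˣ →* MulAut (Multiplicative (Fin n → ℤ)) where
  toFun M := AddEquiv.toMultiplicative (mAut M)
  map_one' := by
    ext v
    simp [mAut]
  map_mul' A B := by
    ext v
    simp [mAut, Matrix.mulVec_mulVec]

lemma tAct_eq {n : ℕ} (M : (Matrix (Fin n) (Fin n) ℤ)ˣ) (e : Multiplicative ℤ) :
    tAct M e = mAutHom (M ^ (Multiplicative.toAdd e)) := by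
  rw [map_zpow]
  rfl

lemma tAct_apply {n : ℕ} (M : (Matrix (Fin n) (Fin n) ℤ)ˣ) (k : ℤ) (v : Fin n → ℤ) :
    tAct M (Multiplicative.ofAdd k) (Multiplicative.ofAdd v) =
      Multiplicative.ofAdd ((↑(M ^ k) : Matrix (Fin n) (Fin n) ℤ) *ᵥ v) := by
  rw [tAct_eq]
  rfl

lemma nf_eq {n : ℕ} (M : (Matrix (Fin n) (Fin n) ℤ)ˣ) (y : Fin n → ℤ) (k : ℤ) :
    nf M y k = (⟨Multiplicative.ofAdd y, Multiplicative.ofAdd k⟩ : G n M) := by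
  ext <;> simp [nf]

lemma conj_nf {n : ℕ} (M : (Matrix (Fin n) (Fin n) ℤ)ˣ) (a : Fin n → ℤ) (e : ℤ)
    (w : Fin n → ℤ) (s : ℤ) (hpow : M ^ s = 1) :
    (⟨Multiplicative.ofAdd a, Multiplicative.ofAdd e⟩ : G n M) * nf M w s *
      (⟨Multiplicative.ofAdd a, Multiplicative.ofAdd e⟩ : G n M)⁻¹ =
    nf M ((↑(M ^ e) : Matrix (Fin n) (Fin n) ℤ) *ᵥ w) s := by
  rw [nf_eq, nf_eq]
  ext
  · simp only [SemidirectProduct.mul_left, SemidirectProduct.mul_right,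
      SemidirectProduct.inv_left, SemidirectProduct.inv_right]
    rw [← MulAut.mul_apply, ← _root_.map_mul, mul_inv_cancel_comm]
    rw [tAct_apply, ← ofAdd_neg, tAct_apply, hpow, Units.val_one, Matrix.one_mulVec,
      ← ofAdd_add, ← ofAdd_add]
    exact congrArg Multiplicative.ofAdd (by abel)
  · simp only [SemidirectProduct.mul_left, SemidirectProduct.mul_right,
      SemidirectProduct.inv_left, SemidirectProduct.inv_right]
    exact mul_inv_cancel_comm (G := Multiplicative ℤ) _ _

/-- If φ^s is the identity, then u = w t^s and v = x t^s are conjugate in G iff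
    x = φ^e(w) for some e ∈ ℤ; in that case t^e conjugates u to v. -/
theorem conj_iff_orbit {n : ℕ} (M : (Matrix (Fin n) (Fin n) ℤ)ˣ)
    (w x : Fin n → ℤ) (s : ℤ) (hpow : M ^ s = 1) :
    (IsConj (nf M w s) (nf M x s) ↔
      ∃ e : ℤ, x = (↑(M ^ e) : Matrix (Fin n) (Fin n) ℤ) *ᵥ w) ∧
    ∀ e : ℤ, x = (↑(M ^ e) : Matrix (Fin n) (Fin n) ℤ) *ᵥ w →
      nf M 0 e * nf M w s * (nf M 0 e)⁻¹ = nf M x s := by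
  have h2 : ∀ e : ℤ, x = (↑(M ^ e) : Matrix (Fin n) (Fin n) ℤ) *ᵥ w →
      nf M 0 e * nf M w s * (nf M 0 e)⁻¹ = nf M x s := by
    intro e he
    rw [he, nf_eq M 0 e]
    exact conj_nf M 0 e w s hpow
  refine ⟨⟨?_, fun ⟨e, he⟩ => isConj_iff.mpr ⟨nf M 0 e, h2 e he⟩⟩, h2⟩
  intro h
  obtain ⟨c, hc⟩ := isConj_iff.mp h
  refine ⟨Multiplicative.toAdd c.right, ?_⟩
  have hcc : c = (⟨Multiplicative.ofAdd (Multiplicative.toAdd c.left),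
      Multiplicative.ofAdd (Multiplicative.toAdd c.right)⟩ : G n M) := by
    ext <;> simp
  rw [hcc, conj_nf M _ _ _ _ hpow, nf_eq, nf_eq] at hc
  have := congrArg SemidirectProduct.left hc
  simpa using this.symm
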